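/- Let $R$ be a commutative ring, $M$ an $R$-module, $e$ an idempotent of $R$, and $N = N_1 \oplus N_2$ a submodule of $M = eM \oplus (1-e)M$ with $N_1 \leq eM$ and $N_2 \leq (1-e)M$. Then the prime radical of $N$ in $M$ satisfies $\sqrt{N} = \sqrt{N_1} \oplus \sqrt{N_2}$, where $\sqrt{N_i}$ is the radical of $N_i$ in $M_i$ as an $R_i$-module ($R_1 = eR$, $R_2 = (1-e)R$). -/

import Mathlib

open Submodule

section Defs
variable (R : Type*) [CommRing R] {M : Type*} [AddCommGroup M] [Module R M]

/-- `(N : M)`, the colon ideal of a submodule with the whole module. -/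
def colonTop (N : Submodule R M) : Ideal R := N.colon ⊤

variable {R}

/-- A prime submodule. -/
def IsPrimeSubmodule (P : Submodule R M) : Prop :=
  P ≠ ⊤ ∧ ∀ (r : R) (m : M), r • m ∈ P → r ∈ colonTop R P ∨ m ∈ P

/-- The prime spectrum of a module, as a set of submodules. -/
def specSet (R : Type*) [CommRing R] (M : Type*) [AddCommGroup M] [Module R M] :
    Set (Submodule R M) := {P | IsPrimeSubmodule P}

/-- `V(N)`. -/
def Vset (N : Submodule R M) : Set (Submodule R M) :=
  {P | IsPrimeSubmodule P ∧ colonTop R N ≤ colonTop R P}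

/-- `V^*(N)`. -/
def VstarSet (N : Submodule R M) : Set (Submodule R M) :=
  {P | IsPrimeSubmodule P ∧ N ≤ P}

/-- The product `NK = (N:M)(K:M)M` of two submodules. -/
def prodSub (N K : Submodule R M) : Submodule R M :=
  (colonTop R N * colonTop R K) • (⊤ : Submodule R M)

/-- The prime radical of a submodule. -/
def radicalSub (N : Submodule R M) : Submodule R M :=
  sInf {P | IsPrimeSubmodule P ∧ N ≤ P}

/-- Adjacency in the Zariski topology-graph `G(τ_T)`. -/
def ZAdj (T : Set (Submodule R M)) (N L : Submodule R M) : Prop :=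
  N ≠ L ∧ N ≠ ⊤ ∧ L ≠ ⊤ ∧ Vset N ∪ Vset L = T ∧ Vset N ≠ T ∧ Vset L ≠ T

/-- Vertices of the Zariski topology-graph `G(τ_T)`. -/
def ZVertex (T : Set (Submodule R M)) (N : Submodule R M) : Prop :=
  ∃ K, ZAdj T N K

/-- The Zariski topology-graph `G(τ_T)` as a simple graph on its vertex set. -/
def ZGraph (T : Set (Submodule R M)) : SimpleGraph {N : Submodule R M // ZVertex T N} where
  Adj a b := ZAdj T a.1 b.1
  symm := by
    constructor
    rintro a b ⟨h1, h2, h3, h4, h5, h6⟩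
    exact ⟨h1.symm, h3, h2, by rwa [Set.union_comm], h6, h5⟩
  loopless := by constructor; rintro a ⟨h1, -⟩; exact h1 rfl

end Defs
section Extra
variable {R : Type*} [CommRing R] {M : Type*} [AddCommGroup M] [Module R M]

/-- Prime submodule of a submodule `W`, internal version (i.e. a prime submodule of the
module `W`). -/
def IsPrimeIn (W P : Submodule R M) : Prop :=
  P < W ∧ ∀ (r : R) (m : M), m ∈ W → r • m ∈ P → (∀ x ∈ W, r • x ∈ P) ∨ m ∈ P

/-- The prime radical of `N` computed inside the submodule `W`. -/
def radicalIn (W N : Submodule R M) : Submodule R M :=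
  sInf {P | IsPrimeIn W P ∧ N ≤ P} ⊓ W

/-- Vertices of the graph `AG(M)^*`. -/
def AGstarVertex (N : Submodule R M) : Prop :=
  N ≠ ⊤ ∧ colonTop R N ≠ Module.annihilator R M ∧
    ∃ K, K ≠ ⊤ ∧ colonTop R K ≠ Module.annihilator R M ∧ prodSub N K = ⊥

/-- Adjacency in the graph `AG(M)^*`. -/
def AGstarAdj (N L : Submodule R M) : Prop :=
  N ≠ L ∧ AGstarVertex N ∧ AGstarVertex L ∧ prodSub N L = ⊥

/-- The clique number of a graph, valued in `ℕ∞`. -/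
noncomputable def cliqueNumE {V : Type*} (G : SimpleGraph V) : ℕ∞ :=
  ⨆ n ∈ {n : ℕ | ∃ s, G.IsNClique n s}, (n : ℕ∞)

end Extra

section MyHelpers
variable {R : Type*} [CommRing R] {M : Type*} [AddCommGroup M] [Module R M]

lemma myMemIdem {f : R} (hf : IsIdempotentElem f) {x : M} :
    x ∈ Ideal.span {f} • (⊤ : Submodule R M) ↔ f • x = x := by
  constructor
  · intro hx
    refine Submodule.smul_induction_on hx ?_ ?_
    · rintro r hr n -
      obtain ⟨c, rfl⟩ := Ideal.mem_span_singleton'.mp hr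
      rw [smul_smul, show f * (c * f) = c * f by rw [show f*(c*f) = (f*f)*c by ring, hf, mul_comm]]
    · intro x y hx hy; rw [smul_add, hx, hy]
  · intro h
    rw [← h]
    exact Submodule.smul_mem_smul (Ideal.mem_span_singleton_self f) trivial

lemma myKill {f : R} (hf : IsIdempotentElem f) (x : M) :
    f • ((1 - f) • x) = 0 := by
  rw [smul_smul, mul_one_sub, hf, sub_self, zero_smul]

lemma mySum (f : R) (x : M) : f • x + (1 - f) • x = x := by
  rw [sub_smul, one_smul, add_sub_cancel]

lemma mySupTop {f : R} {M1 M2 : Submodule R M} (hf : IsIdempotentElem f)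
    (hM1 : M1 = Ideal.span {f} • (⊤ : Submodule R M))
    (hM2 : M2 = Ideal.span {1 - f} • (⊤ : Submodule R M)) : M1 ⊔ M2 = ⊤ := by
  rw [eq_top_iff]
  intro x _
  rw [← mySum f x]
  refine Submodule.add_mem_sup ?_ ?_
  · rw [hM1, myMemIdem hf, smul_smul, hf]
  · rw [hM2, myMemIdem hf.one_sub, smul_smul, hf.one_sub]

lemma myProjMem {f : R} {Q M2 : Submodule R M} (hf : IsIdempotentElem f)
    (hQ : Q ≤ Ideal.span {f} • (⊤ : Submodule R M))
    (hM2 : M2 = Ideal.span {1 - f} • (⊤ : Submodule R M)) {x : M}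
    (hx : x ∈ Q ⊔ M2) : f • x ∈ Q := by
  obtain ⟨a, ha, b, hb, rfl⟩ := Submodule.mem_sup.mp hx
  have ha' : f • a = a := (myMemIdem hf).mp (hQ ha)
  have hb' : f • b = 0 := by
    rw [hM2] at hb
    rw [← (myMemIdem hf.one_sub).mp hb, myKill hf]
  rw [smul_add, ha', hb', add_zero]
  exact ha

lemma myColon {P : Submodule R M} {r : R} :
    r ∈ colonTop R P ↔ ∀ m : M, r • m ∈ P := by
  constructor
  · intro h m; exact Submodule.mem_colon.mp h m trivial
  · intro h; exact Submodule.mem_colon.mpr fun m _ => h m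

lemma myCases {f : R} {M1 M2 P : Submodule R M} (hf : IsIdempotentElem f)
    (hM1 : M1 = Ideal.span {f} • (⊤ : Submodule R M))
    (hM2 : M2 = Ideal.span {1 - f} • (⊤ : Submodule R M))
    (hP : IsPrimeSubmodule P) : M1 ≤ P ∨ M2 ≤ P := by
  by_cases hfP : f ∈ colonTop R P
  · left
    intro x hx
    rw [hM1] at hx
    rw [← (myMemIdem hf).mp hx]
    exact myColon.mp hfP x
  · right
    intro x hx
    rw [hM2] at hx
    rw [← (myMemIdem hf.one_sub).mp hx]
    have h0 : f • ((1 - f) • x) ∈ P := by rw [myKill hf]; exact P.zero_mem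
    rcases hP.2 f _ h0 with h | h
    · exact absurd h hfP
    · exact h

lemma myRestrict {f : R} {M1 M2 P : Submodule R M} (hf : IsIdempotentElem f)
    (hM1 : M1 = Ideal.span {f} • (⊤ : Submodule R M))
    (hM2 : M2 = Ideal.span {1 - f} • (⊤ : Submodule R M))
    (hP : IsPrimeSubmodule P) (hMP : M2 ≤ P) : IsPrimeIn M1 (P ⊓ M1) := by
  constructor
  · refine lt_of_le_of_ne inf_le_right fun h => hP.1 ?_
    have hM1P : M1 ≤ P := le_trans (le_of_eq h.symm) inf_le_left
    rw [eq_top_iff, ← mySupTop hf hM1 hM2]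
    exact sup_le hM1P hMP
  · intro r m hm hrm
    rcases hP.2 r m hrm.1 with h | h
    · exact Or.inl fun x hx => ⟨myColon.mp h x, Submodule.smul_mem _ r hx⟩
    · exact Or.inr ⟨h, hm⟩

lemma myExt {f : R} {M1 M2 Q : Submodule R M} (hf : IsIdempotentElem f)
    (hM1 : M1 = Ideal.span {f} • (⊤ : Submodule R M))
    (hM2 : M2 = Ideal.span {1 - f} • (⊤ : Submodule R M))
    (hQ : IsPrimeIn M1 Q) : IsPrimeSubmodule (Q ⊔ M2) := by
  have hQM1 : Q ≤ M1 := hQ.1.le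
  have hmemM1 : ∀ y : M, f • y ∈ M1 := fun y => by
    rw [hM1, myMemIdem hf, smul_smul, hf]
  have hmemM2 : ∀ y : M, (1 - f) • y ∈ M2 := fun y => by
    rw [hM2, myMemIdem hf.one_sub, smul_smul, hf.one_sub]
  constructor
  · intro htop
    refine hQ.1.not_ge fun x hx => ?_
    have : x ∈ Q ⊔ M2 := htop ▸ trivial
    have := myProjMem hf (hM1 ▸ hQM1) hM2 this
    rwa [(myMemIdem hf).mp (hM1 ▸ hx)] at this
  · intro r m hrm
    have h1 : f • (r • m) ∈ Q := myProjMem hf (hM1 ▸ hQM1) hM2 hrm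
    rw [smul_comm] at h1
    rcases hQ.2 r (f • m) (hmemM1 m) h1 with h | h
    · left
      rw [myColon]
      intro y
      rw [← mySum f y, smul_add]
      exact Submodule.add_mem_sup (h _ (hmemM1 y)) (Submodule.smul_mem _ r (hmemM2 y))
    · right
      rw [← mySum f m]
      exact Submodule.add_mem_sup h (hmemM2 m)

end MyHelpers

/-- for `N = N₁ ⊕ N₂ ≤ eM ⊕ (1-e)M`, the prime radical satisfies
`√N = √N₁ ⊕ √N₂`, the radicals of the factors being computed in `eM` resp. `(1-e)M`. -/
theorem stmt2 {R : Type*} [CommRing R] {M : Type*} [AddCommGroup M] [Module R M]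
    (e : R) (he : IsIdempotentElem e)
    (M1 M2 : Submodule R M)
    (hM1 : M1 = Ideal.span {e} • (⊤ : Submodule R M))
    (hM2 : M2 = Ideal.span {1 - e} • (⊤ : Submodule R M))
    (N1 N2 : Submodule R M) (hN1 : N1 ≤ M1) (hN2 : N2 ≤ M2) :
    radicalSub (N1 ⊔ N2) = radicalIn M1 N1 ⊔ radicalIn M2 N2 := by
  have he' : IsIdempotentElem (1 - e) := he.one_sub
  have hM1' : M1 = Ideal.span {1 - (1 - e)} • (⊤ : Submodule R M) := by
    rw [sub_sub_cancel]; exact hM1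
  apply le_antisymm
  · -- radicalSub ≤ sum of the two radicals
    intro x hx
    rw [radicalSub, Submodule.mem_sInf] at hx
    have h1 : e • x ∈ radicalIn M1 N1 := by
      refine Submodule.mem_inf.mpr ⟨Submodule.mem_sInf.mpr ?_, ?_⟩
      · rintro Q ⟨hQp, hQN⟩
        have hP : IsPrimeSubmodule (Q ⊔ M2) := myExt he hM1 hM2 hQp
        have hxP : x ∈ Q ⊔ M2 := hx _ ⟨hP,
          sup_le (hQN.trans le_sup_left) (hN2.trans le_sup_right)⟩
        exact myProjMem he (hM1 ▸ hQp.1.le) hM2 hxP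
      · rw [hM1, myMemIdem he, smul_smul, he]
    have h2 : (1 - e) • x ∈ radicalIn M2 N2 := by
      refine Submodule.mem_inf.mpr ⟨Submodule.mem_sInf.mpr ?_, ?_⟩
      · rintro Q ⟨hQp, hQN⟩
        have hP : IsPrimeSubmodule (Q ⊔ M1) := myExt he' hM2 hM1' hQp
        have hxP : x ∈ Q ⊔ M1 := hx _ ⟨hP,
          sup_le (hN1.trans le_sup_right) (hQN.trans le_sup_left)⟩
        exact myProjMem he' (hM2 ▸ hQp.1.le) hM1' hxP
      · rw [hM2, myMemIdem he', smul_smul, he']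
    rw [← mySum e x]
    exact Submodule.add_mem_sup h1 h2
  · refine sup_le ?_ ?_
    · refine le_sInf ?_
      rintro P ⟨hPp, hPN⟩
      rcases myCases he hM1 hM2 hPp with h | h
      · exact inf_le_right.trans h
      · have hmem : P ⊓ M1 ∈ {Q | IsPrimeIn M1 Q ∧ N1 ≤ Q} :=
          ⟨myRestrict he hM1 hM2 hPp h, le_inf (le_sup_left.trans hPN) hN1⟩
        exact le_trans inf_le_left ((sInf_le hmem).trans inf_le_left)
    · refine le_sInf ?_
      rintro P ⟨hPp, hPN⟩
      rcases myCases he' hM2 hM1' hPp with h | h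
      · exact inf_le_right.trans h
      · have hmem : P ⊓ M2 ∈ {Q | IsPrimeIn M2 Q ∧ N2 ≤ Q} :=
          ⟨myRestrict he' hM2 hM1' hPp h, le_inf (le_sup_right.trans hPN) hN2⟩
        exact le_trans inf_le_left ((sInf_le hmem).trans inf_le_left)
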